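/- Let Q be an N×N anti-symmetric integer matrix of rank 2 such that no column of Q is the zero vector and every row of Q has sum 0. Then there exists a 2×N integer matrix B of rank 2 whose columns b_1,…,b_N are all nonzero and satisfy b_1+…+b_N = 0, such that Q = Bᵀ·J·B. (In other words, Q is the matrix of the Plücker form of a rank-2 subgroup L ⊆ ℤ^N, namely the row span of B, which is orthogonal to (1,…,1) and not contained in any standard coordinate hyperplane of ℤ^N.) -/

import Mathlib

open Matrix

/-- The 2×2 integer matrix `[[0,1],[-1,0]]`. -/
def Jmat : Matrix (Fin 2) (Fin 2) ℤ := !![0, 1; -1, 0]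

lemma rank_submatrix_le' {k N : ℕ} (A : Matrix (Fin N) (Fin N) ℚ) (f g : Fin k → Fin N) :
    (A.submatrix f g).rank ≤ A.rank := by
  have hP : (Matrix.of fun (i : Fin k) (l : Fin N) => if f i = l then (1:ℚ) else 0) * A
        = A.submatrix f id := by
    ext i j; simp [Matrix.mul_apply, Finset.sum_ite_eq, ite_mul]
  have hQ : (A.submatrix f id) *
      (Matrix.of fun (l : Fin N) (j : Fin k) => if g j = l then (1:ℚ) else 0)
        = A.submatrix f g := by
    ext i j; simp [Matrix.mul_apply, Finset.sum_ite_eq, mul_ite]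
  rw [← hQ]
  refine le_trans (rank_mul_le_left _ _) ?_
  rw [← hP]
  exact rank_mul_le_right _ _

set_option maxHeartbeats 1600000 in
lemma det_skew_four (M : Matrix (Fin 4) (Fin 4) ℤ) (hs : ∀ i j, M j i = - M i j) :
    M.det = (M 0 1 * M 2 3 - M 0 2 * M 1 3 + M 0 3 * M 1 2) ^ 2 := by
  have h00 : M 0 0 = 0 := by have := hs 0 0; linarith
  have h11 : M 1 1 = 0 := by have := hs 1 1; linarith
  have h22 : M 2 2 = 0 := by have := hs 2 2; linarith
  have h33 : M 3 3 = 0 := by have := hs 3 3; linarith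
  have hM : M = !![0, M 0 1, M 0 2, M 0 3; -(M 0 1), 0, M 1 2, M 1 3;
      -(M 0 2), -(M 1 2), 0, M 2 3; -(M 0 3), -(M 1 3), -(M 2 3), 0] := by
    ext i j
    fin_cases i <;> fin_cases j <;>
      simp [h00, h11, h22, h33, hs 0 1, hs 0 2, hs 0 3, hs 1 2, hs 1 3, hs 2 3]
  rw [hM]
  simp [Matrix.det_succ_row_zero, Fin.sum_univ_succ, Fin.succAbove]
  ring

lemma pluecker {N : ℕ} (Q : Matrix (Fin N) (Fin N) ℤ)
    (hskew : Qᵀ = -Q) (hrank : (Q.map (Int.cast : ℤ → ℚ)).rank = 2)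
    (a b c d : Fin N) :
    Q a b * Q c d - Q a c * Q b d + Q a d * Q b c = 0 := by
  set g : Fin 4 → Fin N := ![a, b, c, d] with hg
  have hqs : ∀ i j : Fin N, Q j i = - Q i j := by
    intro i j
    have := congrFun (congrFun hskew i) j
    simpa [Matrix.transpose_apply] using this
  set M : Matrix (Fin 4) (Fin 4) ℤ := Q.submatrix g g with hM
  have hMskew : ∀ i j, M j i = - M i j := fun i j => hqs (g i) (g j)
  have hrk : ((Q.map (Int.cast : ℤ → ℚ)).submatrix g g).rank ≤ 2 := by
    rw [← hrank]; exact rank_submatrix_le' _ g g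
  have hrk4 : ((Q.map (Int.cast : ℤ → ℚ)).submatrix g g).rank ≠ 4 := by omega
  have hdetq : ((Q.map (Int.cast : ℤ → ℚ)).submatrix g g).det = 0 := by
    by_contra h
    exact hrk4 (by
      simpa using Matrix.rank_of_isUnit _ (Matrix.isUnit_iff_isUnit_det _ |>.mpr
        (isUnit_iff_ne_zero.mpr h)))
  have hsub : (Q.map (Int.cast : ℤ → ℚ)).submatrix g g = M.map (Int.cast : ℤ → ℚ) := by
    rw [hM, Matrix.submatrix_map]
  have hdetz : (M.det : ℚ) = 0 := by
    rw [hsub] at hdetq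
    have : (M.map (Int.cast : ℤ → ℚ)).det = ((Int.castRingHom ℚ) M.det : ℚ) :=
      (RingHom.map_det (Int.castRingHom ℚ) M).symm
    rw [this] at hdetq
    simpa using hdetq
  have hdet0 : M.det = 0 := by exact_mod_cast hdetz
  have hpf : M 0 1 * M 2 3 - M 0 2 * M 1 3 + M 0 3 * M 1 2 = 0 := by
    have := det_skew_four M hMskew
    rw [hdet0] at this
    exact (pow_eq_zero_iff (n := 2) (by norm_num)).mp this.symm
  have e0 : g 0 = a := rfl
  have e1 : g 1 = b := rfl
  have e2 : g 2 = c := rfl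
  have e3 : g 3 = d := rfl
  simpa [hM, Matrix.submatrix_apply, e0, e1, e2, e3] using hpf

/-- Every submodule of `ℤ` is principal, phrased via divisibility. -/
lemma int_submodule_principal (S : Submodule ℤ ℤ) : ∃ a : ℤ, a ∈ S ∧ ∀ x : ℤ, x ∈ S ↔ a ∣ x := by
  haveI : S.IsPrincipal := IsPrincipalIdealRing.principal S
  refine ⟨Submodule.IsPrincipal.generator S, Submodule.IsPrincipal.generator_mem S, fun x => ?_⟩
  conv_lhs => rw [← Submodule.IsPrincipal.span_singleton_generator S]
  exact Ideal.mem_span_singleton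

/-- An `N×N` anti-symmetric integer matrix `Q` of rank 2 with no zero
column and all row sums `0` equals `Bᵀ·J·B` for a rank-2 integer matrix `B` whose
columns are nonzero and sum to `0`. -/
theorem stmt3 (N : ℕ) (Q : Matrix (Fin N) (Fin N) ℤ)
    (hskew : Qᵀ = -Q)
    (hrank : (Q.map (Int.cast : ℤ → ℚ)).rank = 2)
    (hcol : ∀ j, ∃ i, Q i j ≠ 0)
    (hrow : ∀ i, ∑ j, Q i j = 0) :
    ∃ B : Matrix (Fin 2) (Fin N) ℤ,
      (B.map (Int.cast : ℤ → ℚ)).rank = 2 ∧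
      (∀ j, (fun k => B k j) ≠ (0 : Fin 2 → ℤ)) ∧
      (∑ j : Fin N, (fun k => B k j)) = (0 : Fin 2 → ℤ) ∧
      Q = Bᵀ * Jmat * B := by
  -- N is positive
  have hNpos : 0 < N := by
    rcases Nat.eq_zero_or_pos N with h0 | h
    · exfalso
      subst h0
      have := Matrix.rank_le_card_height (Q.map (Int.cast : ℤ → ℚ))
      simp at this
      omega
    · exact h
  set q : Fin N := ⟨0, hNpos⟩ with hq
  obtain ⟨p, hd⟩ := hcol q
  -- Plücker relations
  have hPl : ∀ j k, Q p q * Q j k = Q p j * Q q k - Q p k * Q q j := by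
    intro j k
    have := pluecker Q hskew hrank p q j k
    linarith
  -- the lattice generated by the column pairs
  set w : Fin N → (Fin 2 → ℤ) := fun j => ![Q p j, Q q j] with hw
  set Λ : Submodule ℤ (Fin 2 → ℤ) := Submodule.span ℤ (Set.range w) with hΛ
  have hwΛ : ∀ j, w j ∈ Λ := fun j => Submodule.subset_span ⟨j, rfl⟩
  set π0 : (Fin 2 → ℤ) →ₗ[ℤ] ℤ := LinearMap.proj 0 with hπ0
  set π1 : (Fin 2 → ℤ) →ₗ[ℤ] ℤ := LinearMap.proj 1 with hπ1
  obtain ⟨a, haS, hamem⟩ := int_submodule_principal (Λ.map π0)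
  obtain ⟨b, hbS, hbmem⟩ := int_submodule_principal ((Λ ⊓ LinearMap.ker π0).map π1)
  obtain ⟨g1, hg1Λ, hg1a⟩ := Submodule.mem_map.mp haS
  obtain ⟨g2, hg2, hg2b⟩ := Submodule.mem_map.mp hbS
  obtain ⟨hg2Λ, hg2ker⟩ := Submodule.mem_inf.mp hg2
  have hg10 : g1 0 = a := hg1a
  have hg20 : g2 0 = 0 := LinearMap.mem_ker.mp hg2ker
  have hg21 : g2 1 = b := hg2b
  -- coordinates α
  have hαex : ∀ j, ∃ t, Q p j = a * t := by
    intro j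
    have : Q p j ∈ Λ.map π0 := Submodule.mem_map.mpr ⟨w j, hwΛ j, rfl⟩
    obtain ⟨t, ht⟩ := (hamem _).mp this
    exact ⟨t, ht⟩
  choose α hα using hαex
  -- coordinates β
  have hβex : ∀ j, ∃ t, Q q j - α j * g1 1 = b * t := by
    intro j
    have hv : w j - α j • g1 ∈ Λ ⊓ LinearMap.ker π0 := by
      refine Submodule.mem_inf.mpr ⟨Submodule.sub_mem _ (hwΛ j) (Submodule.smul_mem _ _ hg1Λ), ?_⟩
      refine LinearMap.mem_ker.mpr ?_
      show (w j - α j • g1) 0 = 0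
      simp [hw, hg10, hα j, mul_comm]
    have : Q q j - α j * g1 1 ∈ (Λ ⊓ LinearMap.ker π0).map π1 := by
      refine Submodule.mem_map.mpr ⟨w j - α j • g1, hv, ?_⟩
      show (w j - α j • g1) 1 = Q q j - α j * g1 1
      simp [hw]
    obtain ⟨t, ht⟩ := (hbmem _).mp this
    exact ⟨t, ht⟩
  choose β hβ using hβex
  have hβ' : ∀ j, Q q j = α j * g1 1 + b * β j := by
    intro j; have := hβ j; linarith
  -- d divides a * b
  have key1 : ∀ (k : Fin N), ∀ x ∈ Λ, Q p q ∣ (x 0 * Q q k - x 1 * Q p k) := by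
    intro k x hx
    induction hx using Submodule.span_induction with
    | mem x hxr =>
      obtain ⟨j, rfl⟩ := hxr
      refine ⟨Q j k, ?_⟩
      have := hPl j k
      simp only [hw]
      show Q p j * Q q k - Q q j * Q p k = Q p q * Q j k
      linarith
    | zero => simp
    | add x y hx hy ihx ihy =>
      have : (x + y) 0 * Q q k - (x + y) 1 * Q p k
          = (x 0 * Q q k - x 1 * Q p k) + (y 0 * Q q k - y 1 * Q p k) := by
        simp [Pi.add_apply]; ring
      rw [this]; exact dvd_add ihx ihy
    | smul t x hx ihx =>
      have : (t • x) 0 * Q q k - (t • x) 1 * Q p k = t * (x 0 * Q q k - x 1 * Q p k) := by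
        simp [Pi.smul_apply, smul_eq_mul]; ring
      rw [this]; exact Dvd.dvd.mul_left ihx t
  have key2 : ∀ x ∈ Λ, Q p q ∣ (g1 0 * x 1 - g1 1 * x 0) := by
    intro x hx
    induction hx using Submodule.span_induction with
    | mem x hxr =>
      obtain ⟨j, rfl⟩ := hxr
      have := key1 j g1 hg1Λ
      simpa [hw] using this
    | zero => simp
    | add x y hx hy ihx ihy =>
      have : g1 0 * (x + y) 1 - g1 1 * (x + y) 0
          = (g1 0 * x 1 - g1 1 * x 0) + (g1 0 * y 1 - g1 1 * y 0) := by
        simp [Pi.add_apply]; ring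
      rw [this]; exact dvd_add ihx ihy
    | smul t x hx ihx =>
      have : g1 0 * (t • x) 1 - g1 1 * (t • x) 0 = t * (g1 0 * x 1 - g1 1 * x 0) := by
        simp [Pi.smul_apply, smul_eq_mul]; ring
      rw [this]; exact Dvd.dvd.mul_left ihx t
  have hdvd : Q p q ∣ a * b := by
    have := key2 g2 hg2Λ
    rw [hg20, hg21, hg10] at this
    simpa using this
  obtain ⟨c, hcab⟩ := hdvd
  -- the fundamental factorization
  have hQc : ∀ j k, Q j k = c * (α j * β k - α k * β j) := by
    intro j k
    have h1 := hPl j k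
    have h2 : Q p j * Q q k - Q p k * Q q j = (a * b) * (α j * β k - α k * β j) := by
      rw [hα j, hα k, hβ' j, hβ' k]; ring
    refine mul_left_cancel₀ hd ?_
    rw [h1, h2, hcab]; ring
  have hc0 : c ≠ 0 := by
    intro h
    apply hd
    have := hQc p q
    rw [h, zero_mul] at this
    exact this
  have hDpq : α p * β q - α q * β p ≠ 0 := by
    intro h
    apply hd
    rw [hQc p q, h, mul_zero]
  -- column sums
  set Sa : ℤ := ∑ j, α j with hSa'
  set Sb : ℤ := ∑ j, β j with hSb'
  have heq : ∀ i, α i * Sb = β i * Sa := by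
    intro i
    have h1 : ∀ k, Q i k = (c * α i) * β k - (c * β i) * α k := by
      intro k; rw [hQc i k]; ring
    have h2 : ∑ k, Q i k = (c * α i) * Sb - (c * β i) * Sa := by
      rw [Finset.sum_congr rfl (fun k _ => h1 k), Finset.sum_sub_distrib,
        ← Finset.mul_sum, ← Finset.mul_sum]
    rw [hrow i] at h2
    have h3 : c * (α i * Sb - β i * Sa) = 0 := by linarith [h2]
    rcases mul_eq_zero.mp h3 with h | h
    · exact absurd h hc0
    · linarith
  have hSa : Sa = 0 := by
    have h : (α p * β q - α q * β p) * Sa = 0 := by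
      linear_combination α q * (heq p) - α p * (heq q)
    rcases mul_eq_zero.mp h with h' | h'
    · exact absurd h' hDpq
    · exact h'
  have hSb : Sb = 0 := by
    have h : (α p * β q - α q * β p) * Sb = 0 := by
      linear_combination β q * (heq p) - β p * (heq q)
    rcases mul_eq_zero.mp h with h' | h'
    · exact absurd h' hDpq
    · exact h'
  -- the matrix B
  set B : Matrix (Fin 2) (Fin N) ℤ := Matrix.of ![fun j => c * α j, fun j => β j] with hB
  have hB0 : ∀ j, B 0 j = c * α j := fun j => rfl
  have hB1 : ∀ j, B 1 j = β j := fun j => rfl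
  have hfact : Q = Bᵀ * Jmat * B := by
    ext j k
    have : (Bᵀ * Jmat * B) j k = B 0 j * B 1 k - B 1 j * B 0 k := by
      simp [Matrix.mul_apply, Fin.sum_univ_two, Jmat]
      ring
    rw [this, hB0, hB1, hB0, hB1, hQc j k]
    ring
  refine ⟨B, ?_, ?_, ?_, hfact⟩
  · -- rank
    have hmap : Q.map (Int.cast : ℤ → ℚ)
        = (Bᵀ * Jmat).map (Int.cast : ℤ → ℚ) * B.map (Int.cast : ℤ → ℚ) := by
      rw [hfact]
      exact Matrix.map_mul (f := Int.castRingHom ℚ)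
    have hle : (B.map (Int.cast : ℤ → ℚ)).rank ≤ 2 := by
      have := Matrix.rank_le_card_height (B.map (Int.cast : ℤ → ℚ))
      simpa using this
    have hge : (Q.map (Int.cast : ℤ → ℚ)).rank ≤ (B.map (Int.cast : ℤ → ℚ)).rank := by
      rw [hmap]
      exact rank_mul_le_right _ _
    omega
  · -- columns nonzero
    intro j h
    obtain ⟨i, hij⟩ := hcol j
    apply hij
    have h0 : B 0 j = 0 := congrFun h 0
    have h1 : B 1 j = 0 := congrFun h 1
    rw [hB0] at h0
    rw [hB1] at h1
    have hαj : α j = 0 := by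
      rcases mul_eq_zero.mp h0 with h' | h'
      · exact absurd h' hc0
      · exact h'
    rw [hQc i j, hαj, h1]
    ring
  · -- columns sum to zero
    funext k
    rw [Finset.sum_apply]
    fin_cases k
    · show (∑ j, B 0 j) = 0
      calc ∑ j, B 0 j = ∑ j, c * α j := Finset.sum_congr rfl (fun j _ => hB0 j)
        _ = c * Sa := by rw [← Finset.mul_sum]
        _ = 0 := by rw [hSa, mul_zero]
    · show (∑ j, B 1 j) = 0
      calc ∑ j, B 1 j = ∑ j, β j := Finset.sum_congr rfl (fun j _ => hB1 j)
        _ = 0 := hSb
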